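/- At the threshold value p = 1/2, the performance measures of the complete graph and the star graph on n ≥ 2 vertices coincide: μ(K_n) = μ(S_n) = (n−1)/(2n). -/

import Mathlib

open SimpleGraph Finset
open scoped Classical

/-- Total distance: sum of geodesic distances over all ordered pairs of vertices. -/
noncomputable def totalDist {n : ℕ} (g : SimpleGraph (Fin n)) : ℕ :=
  ∑ i : Fin n, ∑ j : Fin n, g.dist i j

/-- Information measure K(g) = n(n-1)/T(g). -/
noncomputable def infoMeasure {n : ℕ} (g : SimpleGraph (Fin n)) : ℝ :=
  ((n : ℝ) * ((n : ℝ) - 1)) / (totalDist g : ℝ)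

/-- Secrecy measure H(g) = (1/n) Σ_i u_i with u_i = 1 - (p d_i + 1)/n. -/
noncomputable def secrecy {n : ℕ} (g : SimpleGraph (Fin n)) (p : ℝ) : ℝ :=
  (1 / (n : ℝ)) * ∑ i : Fin n, (1 - (p * (g.degree i : ℝ) + 1) / (n : ℝ))

/-- Performance measure μ(g) = H(g) · K(g). -/
noncomputable def perf {n : ℕ} (g : SimpleGraph (Fin n)) (p : ℝ) : ℝ :=
  secrecy g p * infoMeasure g

/-- Star graph on `Fin n`: vertex 0 adjacent to all others, no other edges. -/
def starGraph (n : ℕ) : SimpleGraph (Fin n) where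
  Adj i j := i ≠ j ∧ ((i : ℕ) = 0 ∨ (j : ℕ) = 0)
  symm := ⟨fun i j h => ⟨h.1.symm, h.2.symm⟩⟩
  loopless := ⟨fun i h => h.1 rfl⟩

section aux

variable {n : ℕ} [NeZero n]

lemma star_adj (i j : Fin n) :
    (_root_.starGraph n).Adj i j ↔ i ≠ j ∧ (i = 0 ∨ j = 0) := by
  constructor
  · rintro ⟨h1, h2 | h2⟩
    · exact ⟨h1, Or.inl (Fin.ext (by simpa using h2))⟩
    · exact ⟨h1, Or.inr (Fin.ext (by simpa using h2))⟩
  · rintro ⟨h1, h2 | h2⟩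
    · exact ⟨h1, Or.inl (by simp [h2])⟩
    · exact ⟨h1, Or.inr (by simp [h2])⟩

lemma star_dist (i j : Fin n) :
    (_root_.starGraph n).dist i j = if i = j then 0 else if i = 0 ∨ j = 0 then 1 else 2 := by
  split_ifs with h1 h2
  · subst h1; simp
  · exact (SimpleGraph.dist_eq_one_iff_adj).2 ((star_adj i j).2 ⟨h1, h2⟩)
  · push_neg at h2
    obtain ⟨hi, hj⟩ := h2
    have hadj1 : (_root_.starGraph n).Adj i 0 := (star_adj i 0).2 ⟨hi, Or.inr rfl⟩
    have hadj2 : (_root_.starGraph n).Adj 0 j := (star_adj 0 j).2 ⟨fun h => hj h.symm, Or.inl rfl⟩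
    have hle : (_root_.starGraph n).dist i j ≤ 2 := by
      simpa using SimpleGraph.dist_le
        (SimpleGraph.Walk.cons hadj1 (SimpleGraph.Walk.cons hadj2 SimpleGraph.Walk.nil))
    have hne1 : (_root_.starGraph n).dist i j ≠ 1 := by
      intro h
      have := (SimpleGraph.dist_eq_one_iff_adj).1 h
      rw [star_adj] at this
      tauto
    have hpos : 0 < (_root_.starGraph n).dist i j := by
      have hr : (_root_.starGraph n).Reachable i j :=
        ⟨SimpleGraph.Walk.cons hadj1 (SimpleGraph.Walk.cons hadj2 SimpleGraph.Walk.nil)⟩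
      exact hr.pos_dist_of_ne h1
    omega

lemma star_degree (i : Fin n) (inst : Fintype ((_root_.starGraph n).neighborSet i)) :
    @SimpleGraph.degree _ (_root_.starGraph n) i inst = if i = 0 then n - 1 else 1 := by
  split_ifs with h
  · subst h
    have hset : @SimpleGraph.neighborFinset _ (_root_.starGraph n) 0 inst = Finset.univ.erase 0 := by
      ext j
      simp only [SimpleGraph.mem_neighborFinset, star_adj, Finset.mem_erase, Finset.mem_univ,
        and_true, Ne]
      tauto
    rw [← SimpleGraph.card_neighborFinset_eq_degree, hset,
      Finset.card_erase_of_mem (Finset.mem_univ _)]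
    simp
  · have hset : @SimpleGraph.neighborFinset _ (_root_.starGraph n) i inst = {0} := by
      ext j
      simp only [SimpleGraph.mem_neighborFinset, star_adj, Finset.mem_singleton]
      constructor
      · rintro ⟨h1, h2 | h2⟩
        · exact absurd h2 h
        · exact h2
      · rintro rfl
        exact ⟨h, Or.inr rfl⟩
    rw [← SimpleGraph.card_neighborFinset_eq_degree, hset, Finset.card_singleton]

lemma sum_ite_ne (i : Fin n) : ∑ j : Fin n, (if i = j then 0 else 1) = n - 1 := by
  rw [Finset.sum_ite, Finset.sum_const, Finset.sum_const]
  have h : Finset.univ.filter (fun j => ¬ i = j) = Finset.univ.erase i := by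
    ext j; simp [eq_comm, Ne]
  rw [h, Finset.card_erase_of_mem (Finset.mem_univ _)]
  simp

lemma top_degree_aux (i : Fin n) (inst : Fintype ((⊤ : SimpleGraph (Fin n)).neighborSet i)) :
    @SimpleGraph.degree _ (⊤ : SimpleGraph (Fin n)) i inst = n - 1 := by
  rw [← SimpleGraph.card_neighborFinset_eq_degree]
  have hset : @SimpleGraph.neighborFinset _ (⊤ : SimpleGraph (Fin n)) i inst
      = Finset.univ.erase i := by
    ext j
    simp [SimpleGraph.mem_neighborFinset, eq_comm, Ne]
  rw [hset, Finset.card_erase_of_mem (Finset.mem_univ _)]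
  simp

omit [NeZero n] in
lemma totalDist_top : totalDist (⊤ : SimpleGraph (Fin n)) = n * (n - 1) := by
  unfold totalDist
  have h : ∀ i : Fin n, ∑ j : Fin n, (⊤ : SimpleGraph (Fin n)).dist i j = n - 1 := by
    intro i
    simp only [SimpleGraph.dist_top]
    haveI : NeZero n := ⟨by rintro rfl; exact i.elim0⟩
    exact sum_ite_ne i
  rw [Finset.sum_congr rfl (fun i _ => h i), Finset.sum_const]
  simp [mul_comm]

lemma sum_ite_second (hn : 2 ≤ n) (i : Fin n) :
    ∑ j : Fin n, (if i = j ∨ i = 0 ∨ j = 0 then 0 else 1) = if i = 0 then 0 else n - 2 := by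
  split_ifs with h
  · simp [h]
  · rw [Finset.sum_ite, Finset.sum_const, Finset.sum_const]
    have hf : Finset.univ.filter (fun j : Fin n => ¬ (i = j ∨ i = 0 ∨ j = 0))
        = (Finset.univ.erase 0).erase i := by
      ext j
      simp only [Finset.mem_filter, Finset.mem_erase, Finset.mem_univ, and_true, Ne, not_or]
      tauto
    rw [hf, Finset.card_erase_of_mem (Finset.mem_erase.2 ⟨h, Finset.mem_univ _⟩),
      Finset.card_erase_of_mem (Finset.mem_univ _)]
    simp only [Finset.card_univ, Fintype.card_fin, smul_eq_mul, mul_zero, mul_one, zero_add]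
    omega

lemma totalDist_star (hn : 2 ≤ n) :
    totalDist (_root_.starGraph n) = n * (n - 1) + (n - 1) * (n - 2) := by
  unfold totalDist
  have key : ∀ i j : Fin n, (_root_.starGraph n).dist i j =
      (if i = j then 0 else 1) + (if i = j ∨ i = 0 ∨ j = 0 then 0 else 1) := by
    intro i j
    rw [star_dist]
    split_ifs <;> tauto
  simp only [key, Finset.sum_add_distrib]
  have h1 : ∑ i : Fin n, ∑ j : Fin n, (if i = j then (0:ℕ) else 1) = n * (n - 1) := by
    rw [Finset.sum_congr rfl (fun i _ => sum_ite_ne i), Finset.sum_const]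
    simp [mul_comm]
  have h2 : ∑ i : Fin n, ∑ j : Fin n, (if i = j ∨ i = 0 ∨ j = 0 then (0:ℕ) else 1)
      = (n - 1) * (n - 2) := by
    rw [Finset.sum_congr rfl (fun i _ => sum_ite_second hn i), Finset.sum_ite,
      Finset.sum_const, Finset.sum_const]
    have hne : Finset.univ.filter (fun i : Fin n => ¬ i = 0) = Finset.univ.erase 0 := by
      ext j; simp [Ne]
    rw [hne, Finset.card_erase_of_mem (Finset.mem_univ _)]
    simp
  rw [h1, h2]

lemma star_secrecy_sum (hn : 2 ≤ n) (p : ℝ) :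
    ∑ i : Fin n, (1 - (p * ((_root_.starGraph n).degree i : ℝ) + 1) / (n : ℝ))
      = (1 - (p * ((n:ℝ) - 1) + 1) / (n : ℝ))
        + ((n:ℝ) - 1) * (1 - (p * 1 + 1) / (n : ℝ)) := by
  have h1 : (1:ℕ) ≤ n := by omega
  have key : ∀ i : Fin n, (1 - (p * ((_root_.starGraph n).degree i : ℝ) + 1) / (n : ℝ))
      = if i = 0 then (1 - (p * ((n:ℝ) - 1) + 1) / (n : ℝ))
        else (1 - (p * 1 + 1) / (n : ℝ)) := by
    intro i
    rw [star_degree]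
    split_ifs with h
    · rw [Nat.cast_sub h1, Nat.cast_one]
    · rw [Nat.cast_one]
  rw [Finset.sum_congr rfl (fun i _ => key i), Finset.sum_ite, Finset.sum_const,
    Finset.sum_const]
  have heq : Finset.univ.filter (fun i : Fin n => i = 0) = {0} := by
    ext j; simp
  have hne : Finset.univ.filter (fun i : Fin n => ¬ i = 0) = Finset.univ.erase 0 := by
    ext j; simp [Ne]
  rw [heq, hne, Finset.card_erase_of_mem (Finset.mem_univ _), Finset.card_singleton]
  simp only [Finset.card_univ, Fintype.card_fin, one_smul, nsmul_eq_mul]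
  rw [Nat.cast_sub h1, Nat.cast_one]

end aux

/-- at p = 1/2, μ(K_n) = μ(S_n) = (n-1)/(2n) for n ≥ 2. -/
theorem perf_threshold {n : ℕ} (hn : 2 ≤ n) :
    perf (⊤ : SimpleGraph (Fin n)) (1 / 2) = ((n : ℝ) - 1) / (2 * (n : ℝ)) ∧
      perf (starGraph n) (1 / 2) = ((n : ℝ) - 1) / (2 * (n : ℝ)) := by
  haveI : NeZero n := ⟨by omega⟩
  have h1 : (1:ℕ) ≤ n := by omega
  have hn0 : (n : ℝ) ≠ 0 := by positivity
  have hn2 : (2:ℝ) ≤ (n:ℝ) := by exact_mod_cast hn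
  have hn1 : (n : ℝ) - 1 ≠ 0 := by nlinarith
  constructor
  · unfold perf secrecy infoMeasure
    rw [totalDist_top]
    simp only [top_degree_aux, Finset.sum_const, Finset.card_univ, Fintype.card_fin, nsmul_eq_mul]
    rw [Nat.cast_mul, Nat.cast_sub h1, Nat.cast_one]
    field_simp
    ring
  · unfold perf secrecy infoMeasure
    rw [totalDist_star hn, star_secrecy_sum hn]
    rw [Nat.cast_add, Nat.cast_mul, Nat.cast_mul, Nat.cast_sub h1, Nat.cast_sub hn,
      Nat.cast_one, Nat.cast_two]
    have hT : (n:ℝ) * ((n:ℝ) - 1) + ((n:ℝ) - 1) * ((n:ℝ) - 2) = 2 * ((n:ℝ) - 1) ^ 2 := by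
      ring
    rw [hT]
    have hsq : (2:ℝ) * ((n:ℝ) - 1) ^ 2 ≠ 0 := by
      apply mul_ne_zero two_ne_zero
      exact pow_ne_zero 2 hn1
    field_simp
    ring
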